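/- Let ω be a nonempty open subset of ℝ whose closure is contained in the open interval (0,1). Then there exists a function η₀ : ℝ → ℝ which is twice continuously differentiable on [0,1], satisfies η₀(x) > 0 for all x ∈ (0,1), η₀(0) = η₀(1) = 0, and whose derivative satisfies |η₀'(x)| > 0 for every x ∈ [0,1] \ ω. -/

import Mathlib

open Set

/-- Fursikov–Imanuvilov weight-function lemma (Lemma 2.1 of the paper):
for a nonempty open set ω compactly contained in (0,1), there is a function
η₀, twice continuously differentiable on [0,1], positive on (0,1), vanishing
at 0 and 1, whose derivative does not vanish on [0,1] \ ω. -/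
theorem fursikov_imanuvilov_weight
    (ω : Set ℝ) (hne : ω.Nonempty) (hopen : IsOpen ω)
    (hcl : closure ω ⊆ Ioo (0 : ℝ) 1) :
    ∃ η₀ : ℝ → ℝ,
      ContDiffOn ℝ 2 η₀ (Icc (0 : ℝ) 1) ∧
      (∀ x ∈ Ioo (0 : ℝ) 1, 0 < η₀ x) ∧
      η₀ 0 = 0 ∧ η₀ 1 = 0 ∧
      (∀ x ∈ Icc (0 : ℝ) 1 \ ω, 0 < |deriv η₀ x|) := by
  obtain ⟨a, ha⟩ := hne
  have haI : a ∈ Ioo (0 : ℝ) 1 := hcl (subset_closure ha)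
  have ha0 : (0 : ℝ) < a := haI.1
  have ha1 : a < 1 := haI.2
  have ha0' : a ≠ 0 := ne_of_gt ha0
  have ha1' : (1 : ℝ) - a ≠ 0 := by linarith
  set L : ℝ := (2 * a - 1) / (a * (1 - a)) with hL
  refine ⟨fun x => x * (1 - x) * Real.exp (L * x), ?_, ?_, by simp, by simp, ?_⟩
  · apply ContDiff.contDiffOn
    exact (contDiff_id.mul (contDiff_const.sub contDiff_id)).mul
      (Real.contDiff_exp.comp (contDiff_const.mul contDiff_id))
  · intro x hx
    have := Real.exp_pos (L * x)
    have h1 : 0 < x := hx.1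
    have h2 : 0 < 1 - x := by linarith [hx.2]
    positivity
  · intro x hx
    obtain ⟨hxI, hxω⟩ := hx
    have hxa : x ≠ a := fun h => hxω (h ▸ ha)
    -- compute the derivative
    have hd : ∀ y : ℝ, HasDerivAt (fun x => x * (1 - x) * Real.exp (L * x))
        (Real.exp (L * y) * ((1 - 2 * y) + y * (1 - y) * L)) y := by
      intro y
      have h1 : HasDerivAt (fun x : ℝ => x * (1 - x)) (1 - 2 * y) y := by
        have := (hasDerivAt_id y).mul ((hasDerivAt_const y (1:ℝ)).sub (hasDerivAt_id y))
        refine this.congr_deriv ?_; simp only [id_eq, Pi.sub_apply]; ring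
      have h2 : HasDerivAt (fun x : ℝ => Real.exp (L * x)) (L * Real.exp (L * y)) y := by
        have := (Real.hasDerivAt_exp (L * y)).comp y
          ((hasDerivAt_id y).const_mul L)
        refine this.congr_deriv ?_; ring
      have := h1.mul h2
      refine this.congr_deriv ?_; ring
    rw [(hd x).deriv]
    rw [abs_pos]
    -- factor the polynomial part
    have key : (1 - 2 * x) + x * (1 - x) * L = (a - x) * (L * x + 1 / a) := by
      rw [hL]
      field_simp
      ring
    rw [key]
    have hQ : 0 < L * x + 1 / a := by
      have hL1 : L + 1 / a = 1 / (1 - a) := by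
        rw [hL]; field_simp; ring
      rcases le_or_gt 0 L with h | h
      · have : 0 ≤ L * x := mul_nonneg h hxI.1
        have : 0 < 1 / a := by positivity
        linarith
      · have hx1 : x ≤ 1 := hxI.2
        have : L * 1 ≤ L * x := by nlinarith
        have h1a : 0 < 1 / (1 - a) := by
          have : 0 < 1 - a := by linarith
          positivity
        nlinarith
    have hax : a - x ≠ 0 := sub_ne_zero.mpr (Ne.symm hxa)
    exact mul_ne_zero (ne_of_gt (Real.exp_pos _)) (mul_ne_zero hax (ne_of_gt hQ))
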